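/- Let A ∈ ℂ^{m×n×p}, W ∈ ℂ^{n×m×p}, rank_M(A) = rp, rank_M(W) = sp with sp ≤ rp. Suppose W *_M P = Q *_M R where: P ∈ ℂ^{m×m×p} satisfies P *_M P^* = I_M = P^* *_M P; Q ∈ ℂ^{n×n×p} satisfies Q *_M Q^* = I_M = Q^* *_M Q; R ∈ ℂ^{n×m×p} has rank_M(R) = sp and its horizontal slices s+1,…,n vanish. Let Q̃ = Q(:,1:s,:) and R̃ = R(1:s,:,:), and suppose rank_M(R̃) = sp. If there exists an outer inverse X of A with R_M(X) = R_M(W) and N_M(X) = N_M(W), then Q̃^* *_M W *_M A *_M Q̃ ∈ ℂ^{s×s×p} is invertible and X = Q̃ *_M (Q̃^* *_M W *_M A *_M Q̃)^{-1} *_M Q̃^* *_M W. -/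

import Mathlib

open Matrix Finset

/-- A third-order tensor in `ℂ^{m×n×p}`, given by its `p` frontal slices. -/
abbrev Tensor (m n p : ℕ) := Fin p → Matrix (Fin m) (Fin n) ℂ

/-- The transform `Â = A ×₃ M` (mode-3 product with `M`). -/
noncomputable def hatT {m n p : ℕ} (M : Matrix (Fin p) (Fin p) ℂ) (A : Tensor m n p) :
    Tensor m n p :=
  fun l => ∑ s, M l s • A s

/-- `mat(A)`: the block-diagonal matrix whose blocks are frontal slices of `A ×₃ M`. -/
noncomputable def matT {m n p : ℕ} (M : Matrix (Fin p) (Fin p) ℂ) (A : Tensor m n p) :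
    Matrix (Fin m × Fin p) (Fin n × Fin p) ℂ :=
  Matrix.blockDiagonal (hatT M A)

/-- The M-product `A *_M B`, determined by `mat(A *_M B) = mat(A)·mat(B)`. -/
noncomputable def mprod {m n k p : ℕ} (M : Matrix (Fin p) (Fin p) ℂ)
    (A : Tensor m n p) (B : Tensor n k p) : Tensor m k p :=
  fun l => ∑ s, M⁻¹ l s • (hatT M A s * hatT M B s)

/-- The conjugate transpose `A^*`, determined by `mat(A^*) = mat(A)^*`. -/
noncomputable def mstar {m n p : ℕ} (M : Matrix (Fin p) (Fin p) ℂ) (A : Tensor m n p) :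
    Tensor n m p :=
  fun l => ∑ s, M⁻¹ l s • (hatT M A s)ᴴ

/-- The identity tensor `I_M ∈ ℂ^{m×m×p}`, determined by `mat(I_M) = I`. -/
noncomputable def idT {p : ℕ} (M : Matrix (Fin p) (Fin p) ℂ) (m : ℕ) : Tensor m m p :=
  fun l => ∑ s, M⁻¹ l s • (1 : Matrix (Fin m) (Fin m) ℂ)

/-- M-product powers of a square tensor. -/
noncomputable def mpow {m p : ℕ} (M : Matrix (Fin p) (Fin p) ℂ) (A : Tensor m m p) :
    ℕ → Tensor m m p
  | 0 => idT M m
  | k + 1 => mprod M A (mpow M A k)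

/-- `R_M(A)`: the column space of `mat(A)`. -/
noncomputable def rangeM {m n p : ℕ} (M : Matrix (Fin p) (Fin p) ℂ) (A : Tensor m n p) :
    Submodule ℂ (Fin m × Fin p → ℂ) :=
  LinearMap.range (matT M A).mulVecLin

/-- `N_M(A)`: the kernel of `mat(A)`. -/
noncomputable def kerM {m n p : ℕ} (M : Matrix (Fin p) (Fin p) ℂ) (A : Tensor m n p) :
    Submodule ℂ (Fin n × Fin p → ℂ) :=
  LinearMap.ker (matT M A).mulVecLin

/-- `rank_M(A) = rank(mat(A))`. -/
noncomputable def rankM {m n p : ℕ} (M : Matrix (Fin p) (Fin p) ℂ) (A : Tensor m n p) : ℕ :=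
  (matT M A).rank

/-- The first `s` lateral slices `Q(:,1:s,:)`. -/
def latSlice {n s p : ℕ} (hsn : s ≤ n) (Q : Tensor n n p) : Tensor n s p :=
  fun l => (Q l).submatrix id (Fin.castLE hsn)

/-- The first `s` horizontal slices `R(1:s,:,:)`. -/
def horSlice {n m s p : ℕ} (hsn : s ≤ n) (R : Tensor n m p) : Tensor s m p :=
  fun l => (R l).submatrix (Fin.castLE hsn) id

/-- Frobenius norm of a complex matrix. -/
noncomputable def frobNorm {α β : Type*} [Fintype α] [Fintype β] (X : Matrix α β ℂ) : ℝ :=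
  Real.sqrt (∑ i, ∑ j, ‖X i j‖ ^ 2)

lemma hat_invhat {m n p : ℕ} {M : Matrix (Fin p) (Fin p) ℂ} (hM : IsUnit M.det)
    (C : Fin p → Matrix (Fin m) (Fin n) ℂ) (l : Fin p) :
    hatT M (fun l => ∑ t, M⁻¹ l t • C t) l = C l := by
  simp only [hatT, Finset.smul_sum, smul_smul]
  rw [Finset.sum_comm]
  have h : ∀ u : Fin p, (∑ t, (M l t * M⁻¹ t u) • C u) = ((M * M⁻¹) l u) • C u := by
    intro u; rw [← Finset.sum_smul, ← Matrix.mul_apply]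
  simp only [h, Matrix.mul_nonsing_inv M hM, Matrix.one_apply]
  simp [ite_smul]

lemma invhat_hat {m n p : ℕ} {M : Matrix (Fin p) (Fin p) ℂ} (hM : IsUnit M.det)
    (A : Tensor m n p) (l : Fin p) :
    ∑ t, M⁻¹ l t • hatT M A t = A l := by
  simp only [hatT, Finset.smul_sum, smul_smul]
  rw [Finset.sum_comm]
  have h : ∀ u : Fin p, (∑ t, (M⁻¹ l t * M t u) • A u) = ((M⁻¹ * M) l u) • A u := by
    intro u; rw [← Finset.sum_smul, ← Matrix.mul_apply]
  simp only [h, Matrix.nonsing_inv_mul M hM, Matrix.one_apply]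
  simp [ite_smul]

lemma hatT_injective {m n p : ℕ} {M : Matrix (Fin p) (Fin p) ℂ} (hM : IsUnit M.det) :
    Function.Injective (hatT M (m := m) (n := n)) := by
  intro A B h
  funext l
  rw [← invhat_hat hM A l, ← invhat_hat hM B l, h]

lemma hat_mprod {m n k p : ℕ} {M : Matrix (Fin p) (Fin p) ℂ} (hM : IsUnit M.det)
    (A : Tensor m n p) (B : Tensor n k p) (l : Fin p) :
    hatT M (mprod M A B) l = hatT M A l * hatT M B l :=
  hat_invhat hM (fun t => hatT M A t * hatT M B t) l

lemma hat_mstar {m n p : ℕ} {M : Matrix (Fin p) (Fin p) ℂ} (hM : IsUnit M.det)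
    (A : Tensor m n p) (l : Fin p) :
    hatT M (mstar M A) l = (hatT M A l)ᴴ :=
  hat_invhat hM (fun t => (hatT M A t)ᴴ) l

lemma hat_idT {p : ℕ} {M : Matrix (Fin p) (Fin p) ℂ} (hM : IsUnit M.det) (m : ℕ) (l : Fin p) :
    hatT M (idT M m) l = 1 :=
  hat_invhat hM (fun _ => (1 : Matrix (Fin m) (Fin m) ℂ)) l

lemma hat_latSlice {n s p : ℕ} (hsn : s ≤ n) {M : Matrix (Fin p) (Fin p) ℂ}
    (Q : Tensor n n p) (l : Fin p) :
    hatT M (latSlice hsn Q) l = (hatT M Q l).submatrix id (Fin.castLE hsn) := by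
  ext i j
  simp [hatT, latSlice, Matrix.sum_apply]

lemma hat_horSlice {n m s p : ℕ} (hsn : s ≤ n) {M : Matrix (Fin p) (Fin p) ℂ}
    (R : Tensor n m p) (l : Fin p) :
    hatT M (horSlice hsn R) l = (hatT M R l).submatrix (Fin.castLE hsn) id := by
  ext i j
  simp [hatT, horSlice, Matrix.sum_apply]

lemma blockDiagonal_mulVec' {a b p : ℕ} (D : Fin p → Matrix (Fin a) (Fin b) ℂ)
    (u : Fin b × Fin p → ℂ) (i : Fin a) (l : Fin p) :
    (Matrix.blockDiagonal D *ᵥ u) (i, l) = (D l *ᵥ fun j => u (j, l)) i := by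
  simp [Matrix.mulVec, dotProduct, Fintype.sum_prod_type, Matrix.blockDiagonal_apply,
    ite_mul]

lemma mem_range_blockDiagonal {a b p : ℕ} (D : Fin p → Matrix (Fin a) (Fin b) ℂ)
    (v : Fin a × Fin p → ℂ) :
    v ∈ LinearMap.range (Matrix.blockDiagonal D).mulVecLin ↔
      ∀ l, (fun i => v (i, l)) ∈ LinearMap.range (D l).mulVecLin := by
  constructor
  · rintro ⟨u, rfl⟩ l
    refine ⟨fun j => u (j, l), ?_⟩
    funext i
    rw [Matrix.mulVecLin_apply, Matrix.mulVecLin_apply]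
    exact (blockDiagonal_mulVec' D u i l).symm
  · intro h
    choose u hu using h
    refine ⟨fun jl => u jl.2 jl.1, ?_⟩
    funext il
    obtain ⟨i, l⟩ := il
    rw [Matrix.mulVecLin_apply, blockDiagonal_mulVec']
    have := congrFun (hu l) i
    rw [Matrix.mulVecLin_apply] at this
    exact this

lemma rank_blockDiagonal_le {a b p : ℕ} (D : Fin p → Matrix (Fin a) (Fin b) ℂ) :
    (Matrix.blockDiagonal D).rank ≤ ∑ l, (D l).rank := by
  classical
  let f : ∀ l : Fin p, ↥(LinearMap.range (Matrix.blockDiagonal D).mulVecLin) →ₗ[ℂ]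
      ↥(LinearMap.range (D l).mulVecLin) := fun l =>
    LinearMap.codRestrict _ ((LinearMap.funLeft ℂ ℂ (fun i => (i, l))).comp
      (Submodule.subtype _)) (fun v => (mem_range_blockDiagonal D v.1).mp v.2 l)
  have hinj : Function.Injective (LinearMap.pi f) := by
    intro v v' h
    apply Subtype.ext
    funext il
    obtain ⟨i, l⟩ := il
    have h1 := congrFun (congrArg Subtype.val (congrFun h l)) i
    exact h1
  have hle := LinearMap.finrank_le_finrank_of_injective hinj
  rw [Module.finrank_pi_fintype] at hle
  simpa [Matrix.rank] using hle

lemma blocks_rank_eq {a b p : ℕ} (D : Fin p → Matrix (Fin a) (Fin b) ℂ)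
    (h : (Matrix.blockDiagonal D).rank = a * p) (l : Fin p) : (D l).rank = a := by
  have hle : ∀ l', (D l').rank ≤ a := fun l' => by
    simpa using Matrix.rank_le_card_height (D l')
  by_contra hne
  have hlt : (D l).rank < a := lt_of_le_of_ne (hle l) hne
  have hsum : ∑ l', (D l').rank < ∑ _l' : Fin p, a :=
    Finset.sum_lt_sum (fun i _ => hle i) ⟨l, Finset.mem_univ l, hlt⟩
  have hb := rank_blockDiagonal_le D
  rw [Finset.sum_const, Finset.card_univ, Fintype.card_fin, smul_eq_mul, Nat.mul_comm p a] at hsum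
  omega

lemma range_blockwise_le {a b p : ℕ} {Dx Dw : Fin p → Matrix (Fin a) (Fin b) ℂ}
    (h : LinearMap.range (Matrix.blockDiagonal Dx).mulVecLin ≤
         LinearMap.range (Matrix.blockDiagonal Dw).mulVecLin)
    (l : Fin p) (v : Fin a → ℂ) (hv : v ∈ LinearMap.range (Dx l).mulVecLin) :
    v ∈ LinearMap.range (Dw l).mulVecLin := by
  classical
  set V : Fin a × Fin p → ℂ := fun il => if il.2 = l then v il.1 else 0 with hV
  have hmem : V ∈ LinearMap.range (Matrix.blockDiagonal Dx).mulVecLin := by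
    rw [mem_range_blockDiagonal]
    intro l'
    by_cases hl : l' = l
    · subst hl; simpa [V] using hv
    · have hz : (fun i => V (i, l')) = 0 := by funext i; simp [V, hl]
      rw [hz]; exact Submodule.zero_mem _
  have h2 := (mem_range_blockDiagonal Dw V).mp (h hmem) l
  simpa [V] using h2

lemma ker_blockwise_le {a b p : ℕ} {Dx Dw : Fin p → Matrix (Fin a) (Fin b) ℂ}
    (h : LinearMap.ker (Matrix.blockDiagonal Dx).mulVecLin ≤
         LinearMap.ker (Matrix.blockDiagonal Dw).mulVecLin)
    (l : Fin p) (u : Fin b → ℂ) (hu : Dx l *ᵥ u = 0) : Dw l *ᵥ u = 0 := by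
  classical
  set U : Fin b × Fin p → ℂ := fun jl => if jl.2 = l then u jl.1 else 0 with hU
  have hker : Matrix.blockDiagonal Dx *ᵥ U = 0 := by
    funext il
    obtain ⟨i, l'⟩ := il
    rw [blockDiagonal_mulVec']
    by_cases hl : l' = l
    · subst hl
      have hz : (fun j => U (j, l')) = u := by funext j; simp [U]
      rw [hz, hu]; rfl
    · have hz : (fun j => U (j, l')) = 0 := by funext j; simp [U, hl]
      rw [hz, Matrix.mulVec_zero]; rfl
  have h2 := h (LinearMap.mem_ker.mpr (by rw [Matrix.mulVecLin_apply]; exact hker))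
  have h3 : Matrix.blockDiagonal Dw *ᵥ U = 0 := by
    rw [← Matrix.mulVecLin_apply]; exact h2
  funext i
  have h4 := congrFun h3 (i, l)
  rw [blockDiagonal_mulVec'] at h4
  have hz : (fun j => U (j, l)) = u := by funext j; simp [U]
  rw [hz] at h4
  exact h4

lemma eq_of_mulVec_eq {a b : ℕ} {A B : Matrix (Fin a) (Fin b) ℂ}
    (h : ∀ u, A *ᵥ u = B *ᵥ u) : A = B := by
  ext i j
  have := congrFun (h (Pi.single j 1)) i
  simpa using this

lemma core {m n s : ℕ} (hsn : s ≤ n)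
    (a : Matrix (Fin m) (Fin n) ℂ) (w x : Matrix (Fin n) (Fin m) ℂ)
    (p' : Matrix (Fin m) (Fin m) ℂ) (q : Matrix (Fin n) (Fin n) ℂ)
    (rr : Matrix (Fin n) (Fin m) ℂ)
    (hp1 : p' * p'ᴴ = 1)
    (hq2 : qᴴ * q = 1)
    (hwp : w * p' = q * rr)
    (hr0 : ∀ (i : Fin n), s ≤ (i : ℕ) → ∀ j, rr i j = 0)
    (hrt : (rr.submatrix (Fin.castLE hsn) id).rank = s)
    (hxax : x * (a * x) = x)
    (hrange : ∀ u, ∃ u', x *ᵥ u = w *ᵥ u')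
    (hker : ∀ u, x *ᵥ u = 0 → w *ᵥ u = 0) :
    IsUnit ((q.submatrix id (Fin.castLE hsn))ᴴ *
        (w * (a * q.submatrix id (Fin.castLE hsn)))).det ∧
      x = q.submatrix id (Fin.castLE hsn) *
        (((q.submatrix id (Fin.castLE hsn))ᴴ *
            (w * (a * q.submatrix id (Fin.castLE hsn))))⁻¹ *
          ((q.submatrix id (Fin.castLE hsn))ᴴ * w)) := by
  classical
  set E : Matrix (Fin n) (Fin s) ℂ :=
    Matrix.of fun i j => if i = Fin.castLE hsn j then 1 else 0 with hE
  set qt : Matrix (Fin n) (Fin s) ℂ := q.submatrix id (Fin.castLE hsn) with hqt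
  set rt : Matrix (Fin s) (Fin m) ℂ := rr.submatrix (Fin.castLE hsn) id with hrtdef
  -- qt = q * E
  have hqE : qt = q * E := by
    ext i j
    simp [hqt, Matrix.mul_apply, hE, mul_ite]
  -- rt = Eᴴ * rr
  have hrE : rt = Eᴴ * rr := by
    ext i j
    simp [hrtdef, Matrix.mul_apply, hE, Matrix.conjTranspose_apply, ite_mul,
      apply_ite (star : ℂ → ℂ)]
  -- Eᴴ * E = 1
  have hEE : Eᴴ * E = 1 := by
    ext i j
    simp only [Matrix.mul_apply, hE, Matrix.conjTranspose_apply, Matrix.of_apply,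
      apply_ite (star : ℂ → ℂ), star_one, star_zero, ite_mul, one_mul, zero_mul]
    rw [Finset.sum_ite_eq' Finset.univ (Fin.castLE hsn i)
      (fun k => if k = Fin.castLE hsn j then (1 : ℂ) else 0)]
    simp [Matrix.one_apply, Fin.castLE_inj]
  -- E * rt = rr
  have hErr : E * rt = rr := by
    ext i j
    rw [Matrix.mul_apply]
    by_cases hi : (i : ℕ) < s
    · have hieq : i = Fin.castLE hsn ⟨(i : ℕ), hi⟩ := by
        apply Fin.ext; rfl
      have : ∀ k : Fin s, (E i k * rt k j) =
          if k = ⟨(i : ℕ), hi⟩ then rr i j else 0 := by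
        intro k
        simp only [hE, Matrix.of_apply, hrtdef, Matrix.submatrix_apply, id_eq, ite_mul,
          one_mul, zero_mul]
        by_cases hk : k = ⟨(i : ℕ), hi⟩
        · subst hk
          rw [if_pos hieq, if_pos rfl, ← hieq]
        · rw [if_neg, if_neg hk]
          intro hcon
          exact hk (by
            apply Fin.ext
            have := congrArg (Fin.val) hcon
            simpa using this.symm)
      rw [Finset.sum_congr rfl (fun k _ => this k)]
      simp
    · have h0 : rr i j = 0 := hr0 i (not_lt.mp hi) j
      have : ∀ k : Fin s, E i k * rt k j = 0 := by
        intro k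
        have : i ≠ Fin.castLE hsn k := by
          intro hcon
          apply hi
          rw [hcon]
          simpa using k.isLt
        simp [hE, this]
      rw [Finset.sum_congr rfl (fun k _ => this k)]
      simp [h0]
  -- w = q * rr * p'ᴴ
  have hw : w = q * rr * p'ᴴ := by
    have h1 : w = w * (p' * p'ᴴ) := by rw [hp1, Matrix.mul_one]
    rw [h1, ← Matrix.mul_assoc, hwp]
  -- w = qt * (rt * p'ᴴ)
  have hw2 : w = qt * (rt * p'ᴴ) := by
    rw [hw, ← hErr, hqE]
    simp only [Matrix.mul_assoc]
  -- qtᴴ * qt = 1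
  have hqq : qtᴴ * qt = 1 := by
    rw [hqE, Matrix.conjTranspose_mul, Matrix.mul_assoc, ← Matrix.mul_assoc qᴴ, hq2,
      Matrix.one_mul, hEE]
  -- qtᴴ * w = rt * p'ᴴ
  have hqw : qtᴴ * w = rt * p'ᴴ := by
    rw [hw2, ← Matrix.mul_assoc, hqq, Matrix.one_mul]
  -- qt * (qtᴴ * x) = x
  have hqqx : qt * (qtᴴ * x) = x := by
    apply eq_of_mulVec_eq
    intro u
    obtain ⟨u', hu'⟩ := hrange u
    have hxw : x *ᵥ u = qt *ᵥ ((rt * p'ᴴ) *ᵥ u') := by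
      rw [hu', hw2, ← Matrix.mulVec_mulVec]
    rw [← Matrix.mulVec_mulVec, ← Matrix.mulVec_mulVec, hxw,
      Matrix.mulVec_mulVec ((rt * p'ᴴ) *ᵥ u') qtᴴ qt, hqq, Matrix.one_mulVec]
  -- w * (a * x) = w
  have hwax : w * (a * x) = w := by
    apply eq_of_mulVec_eq
    intro u
    have hz : x *ᵥ ((a * x) *ᵥ u - u) = 0 := by
      rw [Matrix.mulVec_sub, Matrix.mulVec_mulVec, hxax]
      exact sub_self _
    have hwz := hker _ hz
    rw [Matrix.mulVec_sub, sub_eq_zero, Matrix.mulVec_mulVec] at hwz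
    rw [← Matrix.mulVec_mulVec, Matrix.mulVec_mulVec] at hwz
    exact hwz
  set t : Matrix (Fin s) (Fin s) ℂ := qtᴴ * (w * (a * qt)) with ht
  -- t * (qtᴴ * x) = qtᴴ * w
  have htx : t * (qtᴴ * x) = qtᴴ * w := by
    calc t * (qtᴴ * x) = qtᴴ * (w * (a * (qt * (qtᴴ * x)))) := by
          simp only [ht, Matrix.mul_assoc]
      _ = qtᴴ * (w * (a * x)) := by rw [hqqx]
      _ = qtᴴ * w := by rw [hwax]
  -- det p'ᴴ is a unit
  have hpd : IsUnit p'ᴴ.det := by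
    have hdet := congrArg Matrix.det hp1
    rw [Matrix.det_mul, Matrix.det_one] at hdet
    exact isUnit_iff_exists_inv.mpr ⟨_, by rw [mul_comm]; exact hdet⟩
  -- rank(qtᴴ * w) = s
  have hrkqw : (qtᴴ * w).rank = s := by
    rw [hqw, Matrix.rank_mul_eq_left_of_isUnit_det p'ᴴ rt hpd, hrt]
  have hrkt_ge : s ≤ t.rank := by
    calc s = (qtᴴ * w).rank := hrkqw.symm
      _ = (t * (qtᴴ * x)).rank := by rw [htx]
      _ ≤ t.rank := Matrix.rank_mul_le_left _ _
  have hrkt_le : t.rank ≤ s := by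
    simpa using Matrix.rank_le_card_height t
  have hrkt : t.rank = s := le_antisymm hrkt_le hrkt_ge
  -- t is invertible
  have hsurj : Function.Surjective t.mulVecLin := by
    rw [← LinearMap.range_eq_top]
    apply Submodule.eq_top_of_finrank_eq
    rw [show (Module.finrank ℂ (LinearMap.range t.mulVecLin)) = t.rank from rfl, hrkt]
    simp [Module.finrank_fintype_fun_eq_card]
  have hdet : IsUnit t.det := by
    choose g hg using fun j => hsurj (Pi.single j 1)
    apply Matrix.isUnit_det_of_right_inverse (B := Matrix.of fun i j => g j i)
    ext i j
    have hh := congrFun (hg j) i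
    rw [Matrix.mulVecLin_apply] at hh
    have hlhs : (t * Matrix.of fun i j => g j i) i j = (t *ᵥ g j) i := rfl
    rw [hlhs, hh, Matrix.one_apply, Pi.single_apply]
  refine ⟨hdet, ?_⟩
  calc x = qt * (qtᴴ * x) := hqqx.symm
    _ = qt * ((t⁻¹ * t) * (qtᴴ * x)) := by
        rw [Matrix.nonsing_inv_mul t hdet, Matrix.one_mul]
    _ = qt * (t⁻¹ * (t * (qtᴴ * x))) := by rw [Matrix.mul_assoc]
    _ = qt * (t⁻¹ * (qtᴴ * w)) := by rw [htx]

/-- Theorem 3.3 (d): expression of the outer inverse using only `Q̃` and `W`. -/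
theorem outer_inverse_MQR_via_QtW {m n p r s : ℕ} (hsn : s ≤ n)
    (M : Matrix (Fin p) (Fin p) ℂ) (hM : IsUnit M.det)
    (A : Tensor m n p) (W : Tensor n m p)
    (P : Tensor m m p) (Q : Tensor n n p) (R : Tensor n m p)
    (hrA : rankM M A = r * p) (hrW : rankM M W = s * p) (hle : s * p ≤ r * p)
    (hQR : mprod M W P = mprod M Q R)
    (hP1 : mprod M P (mstar M P) = idT M m) (hP2 : mprod M (mstar M P) P = idT M m)
    (hQ1 : mprod M Q (mstar M Q) = idT M n) (hQ2 : mprod M (mstar M Q) Q = idT M n)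
    (hrR : rankM M R = s * p)
    (hRvanish : ∀ l (i : Fin n), s ≤ (i : ℕ) → ∀ j, R l i j = 0)
    (hrRt : rankM M (horSlice hsn R) = s * p)
    (X : Tensor n m p)
    (hout : mprod M X (mprod M A X) = X)
    (hRX : rangeM M X = rangeM M W) (hNX : kerM M X = kerM M W) :
    ∃ Y : Tensor s s p,
      mprod M (mprod M (mstar M (latSlice hsn Q)) (mprod M W (mprod M A (latSlice hsn Q)))) Y
        = idT M s ∧
      mprod M Y (mprod M (mstar M (latSlice hsn Q)) (mprod M W (mprod M A (latSlice hsn Q))))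
        = idT M s ∧
      X = mprod M (latSlice hsn Q) (mprod M Y (mprod M (mstar M (latSlice hsn Q)) W)) := by
    classical
  have hq2 : ∀ l, (hatT M Q l)ᴴ * hatT M Q l = 1 := by
    intro l
    have h := congrFun (congrArg (hatT M) hQ2) l
    rw [hat_mprod hM, hat_mstar hM, hat_idT hM] at h
    exact h
  have hp1 : ∀ l, hatT M P l * (hatT M P l)ᴴ = 1 := by
    intro l
    have h := congrFun (congrArg (hatT M) hP1) l
    rw [hat_mprod hM, hat_mstar hM, hat_idT hM] at h
    exact h
  have hwp : ∀ l, hatT M W l * hatT M P l = hatT M Q l * hatT M R l := by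
    intro l
    have h := congrFun (congrArg (hatT M) hQR) l
    rw [hat_mprod hM, hat_mprod hM] at h
    exact h
  have hr0 : ∀ l (i : Fin n), s ≤ (i : ℕ) → ∀ j, hatT M R l i j = 0 := by
    intro l i hi j
    simp [hatT, Matrix.sum_apply, hRvanish _ i hi]
  have hrt : ∀ l, ((hatT M R l).submatrix (Fin.castLE hsn) id).rank = s := by
    intro l
    have h := blocks_rank_eq (hatT M (horSlice hsn R)) hrRt l
    rw [hat_horSlice hsn R l] at h
    exact h
  have hxax : ∀ l, hatT M X l * (hatT M A l * hatT M X l) = hatT M X l := by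
    intro l
    have h := congrFun (congrArg (hatT M) hout) l
    rw [hat_mprod hM, hat_mprod hM] at h
    exact h
  have hrange : ∀ l u, ∃ u', hatT M X l *ᵥ u = hatT M W l *ᵥ u' := by
    intro l u
    have hmem : hatT M X l *ᵥ u ∈ LinearMap.range (hatT M X l).mulVecLin :=
      ⟨u, Matrix.mulVecLin_apply _ _⟩
    have h2 := range_blockwise_le (Dx := hatT M X) (Dw := hatT M W)
      (le_of_eq hRX) l _ hmem
    obtain ⟨u', hu'⟩ := h2
    exact ⟨u', by rw [← hu', Matrix.mulVecLin_apply]⟩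
  have hker : ∀ l u, hatT M X l *ᵥ u = 0 → hatT M W l *ᵥ u = 0 := by
    intro l u hu
    exact ker_blockwise_le (Dx := hatT M X) (Dw := hatT M W) (le_of_eq hNX) l u hu
  set tm : Fin p → Matrix (Fin s) (Fin s) ℂ := fun l =>
    ((hatT M Q l).submatrix id (Fin.castLE hsn))ᴴ *
      (hatT M W l * (hatT M A l * (hatT M Q l).submatrix id (Fin.castLE hsn))) with htm
  have hcore := fun l =>
    core hsn (hatT M A l) (hatT M W l) (hatT M X l) (hatT M P l) (hatT M Q l) (hatT M R l)
      (hp1 l) (hq2 l) (hwp l) (hr0 l) (hrt l) (hxax l) (hrange l) (hker l)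
  refine ⟨fun l => ∑ u, M⁻¹ l u • (tm u)⁻¹, ?_, ?_, ?_⟩
  · apply hatT_injective hM
    funext l
    rw [hat_mprod hM, hat_idT hM, hat_mprod hM, hat_mstar hM, hat_mprod hM, hat_mprod hM,
      hat_latSlice hsn Q l, hat_invhat hM (fun u => (tm u)⁻¹) l]
    exact Matrix.mul_nonsing_inv _ (hcore l).1
  · apply hatT_injective hM
    funext l
    rw [hat_mprod hM, hat_idT hM, hat_mprod hM, hat_mstar hM, hat_mprod hM, hat_mprod hM,
      hat_latSlice hsn Q l, hat_invhat hM (fun u => (tm u)⁻¹) l]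
    exact Matrix.nonsing_inv_mul _ (hcore l).1
  · apply hatT_injective hM
    funext l
    rw [hat_mprod hM, hat_mprod hM, hat_mprod hM, hat_mstar hM, hat_latSlice hsn Q l,
      hat_invhat hM (fun u => (tm u)⁻¹) l]
    exact (hcore l).2
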